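/- Let $\theta = \frac{1+\sqrt{5}}{2}$, $\bar\theta = \frac{1-\sqrt{5}}{2}$, $\alpha = 1 + i - i\theta$, $\bar\alpha = 1 + i - i\bar\theta$, and $\gamma \in \mathbb{Z}[i]$ with $|\gamma| = 1$. For $a, b, c, d \in \mathbb{Z}[i]$, define $\Xi = \begin{pmatrix} \alpha(a + b\theta) & \alpha(c + d\theta) \\ \gamma\bar\alpha(c + d\bar\theta) & \bar\alpha(a + b\bar\theta) \end{pmatrix}$. Then $\det \Xi \in \mathbb{Z}[i]$, and if $\gamma$ is not a norm of the extension $\mathbb{Q}(i,\sqrt{5})/\mathbb{Q}(i)$, then $\det\Xi = 0$ implies $a = b = c = d = 0$; consequently for $(a,b,c,d) \ne 0$, $|\det\Xi| \ge 1$. -/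

import Mathlib

/-- `z` is a Gaussian integer (an element of `ℤ[i]`). -/
def IsGaussInt (z : ℂ) : Prop := ∃ p q : ℤ, z = (p : ℂ) + (q : ℂ) * Complex.I

/-- `z` is a Gaussian rational (an element of `ℚ(i)`). -/
def IsGaussRat (z : ℂ) : Prop := ∃ p q : ℚ, z = (p : ℂ) + (q : ℂ) * Complex.I

open Complex

lemma gi_add {z w : ℂ} (hz : IsGaussInt z) (hw : IsGaussInt w) : IsGaussInt (z + w) := by
  obtain ⟨p, q, rfl⟩ := hz; obtain ⟨r, s, rfl⟩ := hw
  exact ⟨p + r, q + s, by push_cast; ring⟩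

lemma gi_mul {z w : ℂ} (hz : IsGaussInt z) (hw : IsGaussInt w) : IsGaussInt (z * w) := by
  obtain ⟨p, q, rfl⟩ := hz; obtain ⟨r, s, rfl⟩ := hw
  exact ⟨p * r - q * s, p * s + q * r, by push_cast; linear_combination ((q : ℂ) * s) * Complex.I_sq⟩

lemma gi_sub {z w : ℂ} (hz : IsGaussInt z) (hw : IsGaussInt w) : IsGaussInt (z - w) := by
  obtain ⟨p, q, rfl⟩ := hz; obtain ⟨r, s, rfl⟩ := hw
  exact ⟨p - r, q - s, by push_cast; ring⟩

lemma gr_add {z w : ℂ} (hz : IsGaussRat z) (hw : IsGaussRat w) : IsGaussRat (z + w) := by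
  obtain ⟨p, q, rfl⟩ := hz; obtain ⟨r, s, rfl⟩ := hw
  exact ⟨p + r, q + s, by push_cast; ring⟩

lemma gr_mul {z w : ℂ} (hz : IsGaussRat z) (hw : IsGaussRat w) : IsGaussRat (z * w) := by
  obtain ⟨p, q, rfl⟩ := hz; obtain ⟨r, s, rfl⟩ := hw
  exact ⟨p * r - q * s, p * s + q * r, by push_cast; linear_combination ((q : ℂ) * s) * Complex.I_sq⟩

lemma gr_sub {z w : ℂ} (hz : IsGaussRat z) (hw : IsGaussRat w) : IsGaussRat (z - w) := by
  obtain ⟨p, q, rfl⟩ := hz; obtain ⟨r, s, rfl⟩ := hw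
  exact ⟨p - r, q - s, by push_cast; ring⟩

lemma gr_pair_zero {r s : ℚ} (h : (r : ℂ) + (s : ℂ) * Complex.I = 0) : r = 0 ∧ s = 0 := by
  have hr := congrArg Complex.re h
  have hi := congrArg Complex.im h
  simp at hr hi
  exact ⟨by exact_mod_cast hr, by exact_mod_cast hi⟩

lemma gr_div {z w : ℂ} (hz : IsGaussRat z) (hw : IsGaussRat w) : IsGaussRat (z / w) := by
  by_cases hw0 : w = 0
  · exact ⟨0, 0, by simp [hw0]⟩
  obtain ⟨p, q, rfl⟩ := hz; obtain ⟨r, s, rfl⟩ := hw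
  have hrs : (r : ℝ) ^ 2 + (s : ℝ) ^ 2 ≠ 0 := by
    intro h
    have hr : (r : ℝ) = 0 := by nlinarith [sq_nonneg (r:ℝ), sq_nonneg (s:ℝ)]
    have hs : (s : ℝ) = 0 := by nlinarith [sq_nonneg (r:ℝ), sq_nonneg (s:ℝ)]
    apply hw0
    rw [show (r:ℂ) = ((r:ℝ):ℂ) by push_cast; ring, show (s:ℂ) = ((s:ℝ):ℂ) by push_cast; ring, hr, hs]
    simp
  have hrs' : (r : ℚ) ^ 2 + (s : ℚ) ^ 2 ≠ 0 := by
    intro h; apply hrs; exact_mod_cast congrArg (fun x : ℚ => (x : ℝ)) h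
  have hrsC : ((r : ℂ) ^ 2 + (s : ℂ) ^ 2) ≠ 0 := by
    intro h; apply hrs'; exact_mod_cast h
  refine ⟨(p * r + q * s) / (r ^ 2 + s ^ 2), (q * r - p * s) / (r ^ 2 + s ^ 2), ?_⟩
  rw [div_eq_iff hw0]
  push_cast
  field_simp
  linear_combination ((p:ℂ) * s ^ 2 - (q:ℂ) * r * s) * Complex.I_sq

lemma gi_gr {z : ℂ} (hz : IsGaussInt z) : IsGaussRat z := by
  obtain ⟨p, q, rfl⟩ := hz; exact ⟨p, q, by push_cast; ring⟩

lemma no_rat_root (p : ℚ) : p ^ 2 + p - 1 ≠ 0 := by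
  intro h
  have h5 : ((2 * p + 1) : ℚ) ^ 2 = 5 := by linear_combination 4 * h
  have hirr : Irrational (Real.sqrt 5) := by
    simpa using Nat.Prime.irrational_sqrt (by norm_num : Nat.Prime 5)
  apply hirr
  refine ⟨|2 * p + 1|, ?_⟩
  have : Real.sqrt 5 = |((2 * p + 1 : ℚ) : ℝ)| := by
    rw [show ((5:ℝ)) = ((2 * p + 1 : ℚ) : ℝ) ^ 2 by exact_mod_cast congrArg (fun x : ℚ => (x:ℝ)) h5.symm]
    exact Real.sqrt_sq_eq_abs _
  rw [this]; push_cast; ring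

lemma quad_zero {a b : ℂ} (ha : IsGaussInt a) (hb : IsGaussInt b)
    (h : a * a + a * b - b * b = 0) : a = 0 ∧ b = 0 := by
  have hb0 : b = 0 := by
    by_contra hb0
    have hx : IsGaussRat (a / b) := gr_div (gi_gr ha) (gi_gr hb)
    obtain ⟨p, q, hpq⟩ := hx
    have hxe : (a / b) ^ 2 + (a / b) - 1 = 0 := by
      field_simp
      linear_combination h
    rw [hpq] at hxe
    have key : (((p ^ 2 - q ^ 2 + p - 1 : ℚ)) : ℂ) + ((2 * p * q + q : ℚ) : ℂ) * I = 0 := by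
      push_cast
      linear_combination hxe - (q:ℂ) ^ 2 * Complex.I_sq
    obtain ⟨h1, h2⟩ := gr_pair_zero key
    have h2' : q * (2 * p + 1) = 0 := by linear_combination h2
    rcases mul_eq_zero.mp h2' with hq | hp
    · subst hq
      exact no_rat_root p (by linear_combination h1)
    · have hpv : p = -1/2 := by linarith
      rw [hpv] at h1
      nlinarith [sq_nonneg q]
  subst hb0
  refine ⟨?_, rfl⟩
  have : a * a = 0 := by linear_combination h
  simpa using this

lemma gi_abs_ge {z : ℂ} (hz : IsGaussInt z) (h0 : z ≠ 0) : 1 ≤ ‖z‖ := by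
  obtain ⟨p, q, rfl⟩ := hz
  have hpq : ¬(p = 0 ∧ q = 0) := by rintro ⟨rfl, rfl⟩; simp at h0
  have hint : (1 : ℤ) ≤ p ^ 2 + q ^ 2 := by
    rcases not_and_or.mp hpq with h | h
    · have h1 := Int.one_le_abs h
      have h2 : 1 ≤ p ^ 2 := by nlinarith [_root_.sq_abs p]
      nlinarith [sq_nonneg q]
    · have h1 := Int.one_le_abs h
      have h2 : 1 ≤ q ^ 2 := by nlinarith [_root_.sq_abs q]
      nlinarith [sq_nonneg p]
  have h1 : (1 : ℝ) ≤ Complex.normSq ((p : ℂ) + (q : ℂ) * I) := by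
    rw [Complex.normSq_apply]
    simp
    have : (1 : ℝ) ≤ (p : ℝ) ^ 2 + (q : ℝ) ^ 2 := by exact_mod_cast hint
    nlinarith
  nlinarith [Complex.sq_norm ((p : ℂ) + (q : ℂ) * I), norm_nonneg ((p : ℂ) + (q : ℂ) * I)]

open Complex in
/-- Non-vanishing determinant of the Golden-code-type codeword matrix:
with `θ = (1+√5)/2`, `α = 1 + i - iθ`, `γ ∈ ℤ[i]`, `|γ| = 1`, and
`Ξ = [[α(a+bθ), α(c+dθ)], [γᾱ(c+dθ̄), ᾱ(a+bθ̄)]]` for `a,b,c,d ∈ ℤ[i]`,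
one has `det Ξ ∈ ℤ[i]`; and if `γ` is not a norm of `ℚ(i,√5)/ℚ(i)`, then
`det Ξ = 0` forces `a = b = c = d = 0`, so that `|det Ξ| ≥ 1` whenever
`(a,b,c,d) ≠ 0`. -/
theorem golden_code_nvd (a b c d γ : ℂ)
    (ha : IsGaussInt a) (hb : IsGaussInt b) (hc : IsGaussInt c) (hd : IsGaussInt d)
    (hγ : IsGaussInt γ) (hγ1 : ‖γ‖ = 1)
    (θ θbar α αbar : ℂ)
    (hθ : θ = (1 + Real.sqrt 5) / 2) (hθbar : θbar = (1 - Real.sqrt 5) / 2)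
    (hα : α = 1 + I - I * θ) (hαbar : αbar = 1 + I - I * θbar)
    (Ξ : Matrix (Fin 2) (Fin 2) ℂ)
    (hΞ : Ξ = !![α * (a + b * θ), α * (c + d * θ);
                 γ * αbar * (c + d * θbar), αbar * (a + b * θbar)]) :
    IsGaussInt Ξ.det
    ∧ ((¬ ∃ x y : ℂ, IsGaussRat x ∧ IsGaussRat y ∧ x ^ 2 - 5 * y ^ 2 = γ) →
        ((Ξ.det = 0 → a = 0 ∧ b = 0 ∧ c = 0 ∧ d = 0)
          ∧ (¬ (a = 0 ∧ b = 0 ∧ c = 0 ∧ d = 0) → 1 ≤ ‖Ξ.det‖))) := by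
  have h5 : (Real.sqrt 5 : ℂ) * (Real.sqrt 5 : ℂ) = 5 := by
    norm_cast
    exact Real.mul_self_sqrt (by norm_num)
  have hsum : θ + θbar = 1 := by rw [hθ, hθbar]; push_cast; ring
  have hprod : θ * θbar = -1 := by
    rw [hθ, hθbar]; push_cast; linear_combination (-(1:ℂ)/4) * h5
  have hαα : α * αbar = 2 + I := by
    rw [hα, hαbar]
    linear_combination (-(I + I ^ 2)) * hsum + I ^ 2 * hprod + (-1 : ℂ) * Complex.I_sq
  have hS : (a + b * θ) * (a + b * θbar) = a * a + a * b - b * b := by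
    linear_combination a * b * hsum + b * b * hprod
  have hT : (c + d * θ) * (c + d * θbar) = c * c + c * d - d * d := by
    linear_combination c * d * hsum + d * d * hprod
  have hdet : Ξ.det = (2 + I) * ((a * a + a * b - b * b) - γ * (c * c + c * d - d * d)) := by
    rw [hΞ, Matrix.det_fin_two_of]
    linear_combination ((a + b * θ) * (a + b * θbar) - γ * ((c + d * θ) * (c + d * θbar))) * hαα
      + (2 + I) * hS - ((2 + I) * γ) * hT
  have hSint : IsGaussInt (a * a + a * b - b * b) :=
    gi_sub (gi_add (gi_mul ha ha) (gi_mul ha hb)) (gi_mul hb hb)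
  have hTint : IsGaussInt (c * c + c * d - d * d) :=
    gi_sub (gi_add (gi_mul hc hc) (gi_mul hc hd)) (gi_mul hd hd)
  have hdetint : IsGaussInt Ξ.det := by
    rw [hdet]
    exact gi_mul ⟨2, 1, by push_cast; ring⟩ (gi_sub hSint (gi_mul hγ hTint))
  refine ⟨hdetint, fun hnorm => ?_⟩
  have h2I : (2 + I : ℂ) ≠ 0 := by
    intro h
    have := congrArg Complex.re h
    simp at this
  have main : Ξ.det = 0 → a = 0 ∧ b = 0 ∧ c = 0 ∧ d = 0 := by
    intro hdet0
    rw [hdet] at hdet0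
    have hST : a * a + a * b - b * b = γ * (c * c + c * d - d * d) := by
      rcases mul_eq_zero.mp hdet0 with h | h
      · exact absurd h h2I
      · linear_combination h
    have hT0 : c * c + c * d - d * d = 0 := by
      by_contra hT0
      apply hnorm
      refine ⟨((a + b / 2) * (c + d / 2) - 5 * ((b / 2) * (d / 2))) / (c * c + c * d - d * d),
              ((b / 2) * (c + d / 2) - (a + b / 2) * (d / 2)) / (c * c + c * d - d * d), ?_, ?_, ?_⟩
      · exact gr_div (gr_sub (gr_mul (gr_add (gi_gr ha) (gr_div (gi_gr hb) ⟨2, 0, by push_cast; ring⟩))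
            (gr_add (gi_gr hc) (gr_div (gi_gr hd) ⟨2, 0, by push_cast; ring⟩)))
            (gr_mul ⟨5, 0, by push_cast; ring⟩ (gr_mul (gr_div (gi_gr hb) ⟨2, 0, by push_cast; ring⟩)
              (gr_div (gi_gr hd) ⟨2, 0, by push_cast; ring⟩))))
          (gi_gr hTint)
      · exact gr_div (gr_sub (gr_mul (gr_div (gi_gr hb) ⟨2, 0, by push_cast; ring⟩)
            (gr_add (gi_gr hc) (gr_div (gi_gr hd) ⟨2, 0, by push_cast; ring⟩)))
            (gr_mul (gr_add (gi_gr ha) (gr_div (gi_gr hb) ⟨2, 0, by push_cast; ring⟩))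
              (gr_div (gi_gr hd) ⟨2, 0, by push_cast; ring⟩)))
          (gi_gr hTint)
      · have hT2 : (c * c + c * d - d * d) ^ 2 ≠ 0 := pow_ne_zero 2 hT0
        have hkey : ((a + b / 2) * (c + d / 2) - 5 * ((b / 2) * (d / 2))) ^ 2
            - 5 * ((b / 2) * (c + d / 2) - (a + b / 2) * (d / 2)) ^ 2
            = γ * (c * c + c * d - d * d) ^ 2 := by
          linear_combination (c * c + c * d - d * d) * hST
        rw [div_pow, div_pow]
        rw [show ((a + b / 2) * (c + d / 2) - 5 * ((b / 2) * (d / 2))) ^ 2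
              / (c * c + c * d - d * d) ^ 2
            - 5 * (((b / 2) * (c + d / 2) - (a + b / 2) * (d / 2)) ^ 2
              / (c * c + c * d - d * d) ^ 2)
            = (((a + b / 2) * (c + d / 2) - 5 * ((b / 2) * (d / 2))) ^ 2
              - 5 * ((b / 2) * (c + d / 2) - (a + b / 2) * (d / 2)) ^ 2)
              / (c * c + c * d - d * d) ^ 2 by ring]
        rw [hkey, mul_div_assoc, div_self hT2, mul_one]
    have hS0 : a * a + a * b - b * b = 0 := by rw [hT0, mul_zero] at hST; exact hST
    obtain ⟨ha0, hb0⟩ := quad_zero ha hb hS0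
    obtain ⟨hc0, hd0⟩ := quad_zero hc hd hT0
    exact ⟨ha0, hb0, hc0, hd0⟩
  refine ⟨main, fun hne => ?_⟩
  exact gi_abs_ge hdetint (fun h => hne (main h))
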